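/- In the wheel graph on k vertices, the resistance distance between the hub vertex k and any rim vertex i ∈ {1,...,k−1} equals F_{2k−2}² / (F_{4k−4} − 2F_{2k−2}), where F_j is the j-th Fibonacci number. -/

import Mathlib

/-- Adjacency of the wheel graph on `n` vertices (indices `0, …, n-1`, index `a`
standing for the paper's vertex `a+1`): a cycle on `0, …, n-2` together with the
hub `n-1` joined to every cycle vertex. -/
def wheelAdj (n a b : ℕ) : Bool :=
  decide (((a + 1 = b ∨ b + 1 = a ∨ (a = 0 ∧ b = n - 2) ∨ (b = 0 ∧ a = n - 2)) ∧
      a ≠ b ∧ a < n - 1 ∧ b < n - 1) ∨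
    (a = n - 1 ∧ b < n - 1) ∨ (b = n - 1 ∧ a < n - 1))

/-- Graph Laplacian of the graph on `n` vertices with adjacency `adj`. -/
def lapl (n : ℕ) (adj : ℕ → ℕ → Bool) : Matrix (Fin n) (Fin n) ℚ :=
  fun i j =>
    if i = j then ((Finset.univ.filter (fun l : Fin n => adj i.val l.val = true)).card : ℚ)
    else if adj i.val j.val then -1 else 0

def Cc (n : ℕ) : Matrix (Fin n) (Fin n) ℚ := fun i j =>
  if (i:ℕ) = j then 3
  else if (i:ℕ)+1 = j ∨ (j:ℕ)+1 = i ∨ ((i:ℕ) = 0 ∧ (j:ℕ)+1 = n) ∨ ((j:ℕ) = 0 ∧ (i:ℕ)+1 = n) then -1 else 0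

def T (n : ℕ) : Matrix (Fin n) (Fin n) ℚ := fun i j =>
  if (i : ℕ) = j then 3 else if (i : ℕ) + 1 = j ∨ (j : ℕ) + 1 = i then -1 else 0

lemma T_minor (n : ℕ) : (T (n + 1)).submatrix Fin.succ Fin.succ = T n := by
  ext a b
  simp only [Matrix.submatrix_apply, T, Fin.val_succ]
  rw [if_congr (show (a:ℕ)+1 = (b:ℕ)+1 ↔ (a:ℕ) = (b:ℕ) by omega) rfl rfl,
    if_congr (show ((a:ℕ)+1+1 = (b:ℕ)+1 ∨ (b:ℕ)+1+1 = (a:ℕ)+1) ↔ ((a:ℕ)+1 = b ∨ (b:ℕ)+1 = a) by omega) rfl rfl]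

lemma detT_step (n : ℕ) : (T (n + 2)).det = 3 * (T (n + 1)).det - (T n).det := by
  rw [Matrix.det_succ_row_zero, Fin.sum_univ_succ, Fin.sum_univ_succ]
  have hz : ∀ j : Fin n, ((-1:ℚ)) ^ (((j.succ.succ : Fin (n+2))) : ℕ) * T (n+2) 0 j.succ.succ *
      ((T (n+2)).submatrix Fin.succ (Fin.succAbove j.succ.succ)).det = 0 := by
    intro j
    have h : T (n+2) 0 j.succ.succ = 0 := by
      simp only [T, Fin.val_succ, Fin.val_zero]
      simp only [show ¬ (0 = (j:ℕ)+1+1) by omega, show ¬ (0 + 1 = (j:ℕ)+1+1 ∨ (j:ℕ)+1+1+1 = 0) by omega, if_false]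
    rw [h]; ring
  rw [Finset.sum_congr rfl (fun j _ => hz j), Finset.sum_const, smul_zero]
  have h00 : T (n+2) 0 0 = 3 := by simp [T]
  have h01 : T (n+2) 0 (Fin.succ 0) = -1 := by
    simp only [T, Fin.val_succ, Fin.val_zero]; norm_num
  have hm0 : ((T (n+2)).submatrix Fin.succ (Fin.succAbove 0)).det = (T (n+1)).det := by
    rw [Fin.succAbove_zero, T_minor]
  -- minor at column 1
  have hM : ((T (n+2)).submatrix Fin.succ (Fin.succAbove (Fin.succ 0))).det = -(T n).det := by
    set M := (T (n+2)).submatrix Fin.succ (Fin.succAbove (Fin.succ 0)) with hMdef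
    rw [Matrix.det_succ_column_zero, Fin.sum_univ_succ]
    have hz2 : ∀ a : Fin n, ((-1:ℚ)) ^ ((a.succ : Fin (n+1)) : ℕ) * M a.succ 0 *
        (M.submatrix (Fin.succAbove a.succ) Fin.succ).det = 0 := by
      intro a
      have h : M a.succ 0 = 0 := by
        simp only [hMdef, Matrix.submatrix_apply, T]
        have h1 : ((Fin.succ 0 : Fin (n+2)).succAbove (0 : Fin (n+1))) = 0 := by
          ext; simp [Fin.succAbove]
        rw [h1]
        simp only [Fin.val_succ, Fin.val_zero]
        simp only [show ¬ ((a:ℕ)+1+1 = 0) by omega, show ¬ ((a:ℕ)+1+1+1 = 0 ∨ 0 + 1 = (a:ℕ)+1+1) by omega, if_false]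
      rw [h]; ring
    rw [Finset.sum_congr rfl (fun a _ => hz2 a), Finset.sum_const, smul_zero]
    have hM00 : M 0 0 = -1 := by
      simp only [hMdef, Matrix.submatrix_apply]
      have h1 : ((Fin.succ 0 : Fin (n+2)).succAbove (0 : Fin (n+1))) = 0 := by
        ext; simp [Fin.succAbove]
      rw [h1]
      simp only [T, Fin.val_succ, Fin.val_zero]; norm_num
    have hmm : (M.submatrix (Fin.succAbove 0) Fin.succ) = T n := by
      ext a b
      simp only [hMdef, Matrix.submatrix_apply, Fin.succAbove_zero]
      have h2 : ((Fin.succ 0 : Fin (n+2)).succAbove b.succ) = b.succ.succ := by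
        ext; simp [Fin.succAbove, Fin.lt_def]
      rw [h2]
      simp only [T, Fin.val_succ]
      rw [if_congr (by omega : (a:ℕ)+1+1 = (b:ℕ)+1+1 ↔ (a:ℕ) = b) rfl rfl,
        if_congr (by omega : ((a:ℕ)+1+1+1 = (b:ℕ)+1+1 ∨ (b:ℕ)+1+1+1 = (a:ℕ)+1+1) ↔ ((a:ℕ)+1 = b ∨ (b:ℕ)+1 = a)) rfl rfl]
    rw [hM00, hmm]
    simp
  rw [h00, h01, hm0, hM]
  simp; ring

lemma fib3 (j : ℕ) : Nat.fib (j+2) = Nat.fib j + Nat.fib (j+1) := Nat.fib_add_two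

lemma detT : ∀ n, (T n).det = (Nat.fib (2 * n + 2) : ℚ)
  | 0 => by simp [T, Matrix.det_fin_zero]
  | 1 => by
      rw [Matrix.det_fin_one]
      simp [T]
      norm_num [Nat.fib]
  | (n + 2) => by
      rw [detT_step, detT n, detT (n + 1)]
      have h1 : Nat.fib (2 * (n+2) + 2) + Nat.fib (2 * n + 2) = 3 * Nat.fib (2 * (n+1) + 2) := by
        have a1 := fib3 (2*n+2)
        have a2 := fib3 (2*n+3)
        have a3 := fib3 (2*n+4)
        ring_nf at a1 a2 a3 ⊢
        omega
      have h2 := congrArg (fun x : ℕ => (x : ℚ)) h1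
      push_cast at h2
      linarith

lemma wheelAdj_rim {m a b : ℕ} (ha : a < m+3) (hb : b < m+3) :
    wheelAdj (m+4) a b = true ↔
      ((a+1 = b ∨ b+1 = a ∨ (a = 0 ∧ b+1 = m+3) ∨ (b = 0 ∧ a+1 = m+3)) ∧ a ≠ b) := by
  simp only [wheelAdj, decide_eq_true_eq]
  omega

lemma deg (m v : ℕ) (hv : v < m+3) :
    (Finset.univ.filter (fun l : Fin (m+4) => wheelAdj (m+4) v l.val = true)).card = 3 := by
  have hset : (Finset.univ.filter (fun l : Fin (m+4) => wheelAdj (m+4) v l.val = true)) =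
      {(⟨if v = 0 then m+2 else v-1, by split_ifs <;> omega⟩ : Fin (m+4)),
       ⟨if v = m+2 then 0 else v+1, by split_ifs <;> omega⟩, ⟨m+3, by omega⟩} := by
    ext l
    simp only [Finset.mem_filter, Finset.mem_univ, true_and, Finset.mem_insert,
      Finset.mem_singleton, Fin.ext_iff, wheelAdj, decide_eq_true_eq]
    have hl := l.isLt
    split_ifs <;> omega
  rw [hset]
  have h1 : (⟨if v = 0 then m+2 else v-1, by split_ifs <;> omega⟩ : Fin (m+4)) ∉
      ({⟨if v = m+2 then 0 else v+1, by split_ifs <;> omega⟩, ⟨m+3, by omega⟩} : Finset (Fin (m+4))) := by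
    simp only [Finset.mem_insert, Finset.mem_singleton, Fin.ext_iff]
    intro hc
    rcases hc with hc | hc <;> split_ifs at hc <;> omega
  have h2 : (⟨if v = m+2 then 0 else v+1, by split_ifs <;> omega⟩ : Fin (m+4)) ∉
      ({⟨m+3, by omega⟩} : Finset (Fin (m+4))) := by
    simp only [Finset.mem_singleton, Fin.ext_iff]
    intro hc
    split_ifs at hc <;> omega
  rw [Finset.card_insert_of_notMem h1, Finset.card_insert_of_notMem h2, Finset.card_singleton]

lemma Lsub_C (m : ℕ) :
    ((lapl (m+4) (wheelAdj (m+4))).submatrix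
      (fun a : Fin (m+3) => a.castSucc) (fun a : Fin (m+3) => a.castSucc)) = Cc (m+3) := by
  ext a b
  simp only [Matrix.submatrix_apply, lapl, Cc, Fin.coe_castSucc]
  by_cases hab : a = b
  · subst hab
    rw [if_pos rfl, if_pos (by rfl)]
    rw [deg m a.val a.isLt]
    norm_num
  · rw [if_neg (by simpa [Fin.castSucc_inj] using hab),
      if_neg (fun h => hab (Fin.ext h))]
    rw [if_congr ((wheelAdj_rim a.isLt b.isLt).trans
      ⟨fun h => h.1, fun h => ⟨h, fun hh => hab (Fin.ext hh)⟩⟩) rfl rfl]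

lemma modc (N x : ℕ) (h : x < 2*N) : x % N = x ∨ x % N + N = x := by
  rcases Nat.lt_or_ge x N with h' | h'
  · exact Or.inl (Nat.mod_eq_of_lt h')
  · right
    rw [Nat.mod_eq_sub_mod h', Nat.mod_eq_of_lt (by omega)]
    omega

def g (m i : ℕ) (a : Fin (m+2)) : Fin (m+4) :=
  ⟨(i + a) % (m+3), by have := Nat.mod_lt (x := i + a) (y := m+3) (by omega); omega⟩

lemma g_lt (m i : ℕ) (a : Fin (m+2)) : ((g m i a) : ℕ) < m + 3 :=
  Nat.mod_lt _ (by omega)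

lemma g_val (m i : ℕ) (a : Fin (m+2)) : ((g m i a) : ℕ) = (i + a) % (m+3) := rfl

lemma Lsub_T (m i : ℕ) (h1 : 1 ≤ i) (h2 : i ≤ m+3) :
    ((lapl (m+4) (wheelAdj (m+4))).submatrix (g m i) (g m i)) = T (m+2) := by
  ext a b
  have hma := modc (m+3) (i + a) (by omega)
  have hmb := modc (m+3) (i + b) (by omega)
  have hxa := g_lt m i a
  have hxb := g_lt m i b
  simp only [Matrix.submatrix_apply, lapl, T]
  by_cases hab : a = b
  · subst hab
    rw [if_pos rfl, if_pos rfl, deg m _ (g_lt m i a)]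
    norm_num
  · have hvab : (a : ℕ) ≠ (b : ℕ) := fun hh => hab (Fin.ext hh)
    have hgab : ((g m i a) : ℕ) ≠ ((g m i b) : ℕ) := by
      simp only [g_val] at hxa hxb ⊢
      omega
    rw [if_neg (fun hh => hgab (congrArg Fin.val hh)), if_neg hvab]
    have hiff : (wheelAdj (m+4) ((g m i a) : ℕ) ((g m i b) : ℕ) = true) ↔
        ((a:ℕ)+1 = (b:ℕ) ∨ (b:ℕ)+1 = (a:ℕ)) := by
      rw [wheelAdj_rim hxa hxb]
      simp only [g_val] at hxa hxb hgab ⊢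
      have hab2 : (a:ℕ) < m+2 := a.isLt
      have hbb2 : (b:ℕ) < m+2 := b.isLt
      constructor
      · rintro ⟨h, _⟩; omega
      · intro h; omega
    rw [if_congr hiff rfl rfl]

lemma num_det (m i : ℕ) (h1 : 1 ≤ i) (h2 : i ≤ m+3) :
    ((lapl (m+4) (wheelAdj (m+4))).submatrix
      (fun a : Fin (m+2) => ((⟨i-1, (by omega : i - 1 < m + 2 + 1)⟩ : Fin (m+3)).succAbove a).castSucc)
      (fun a : Fin (m+2) => ((⟨i-1, (by omega : i - 1 < m + 2 + 1)⟩ : Fin (m+3)).succAbove a).castSucc)).det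
    = (T (m+2)).det := by
  have hφb : ∀ a : Fin (m+2), (if (a:ℕ)+1 < i then (a:ℕ)+m+3-i else (a:ℕ)+1-i) < m+2 := by
    intro a; have := a.isLt; split_ifs <;> omega
  set φ : Fin (m+2) → Fin (m+2) := fun a => ⟨_, hφb a⟩ with hφ
  have hφval : ∀ a : Fin (m+2), (φ a : ℕ) = if (a:ℕ)+1 < i then (a:ℕ)+m+3-i else (a:ℕ)+1-i :=
    fun a => rfl
  have hinj : Function.Injective φ := by
    intro a b hab
    have h := congrArg Fin.val hab
    rw [hφval, hφval] at h
    have ha := a.isLt; have hb := b.isLt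
    ext
    split_ifs at h <;> omega
  have hbij := (Fintype.bijective_iff_injective_and_card φ).2 ⟨hinj, rfl⟩
  have hfg : (fun a : Fin (m+2) => ((⟨i-1, by omega⟩ : Fin (m+3)).succAbove a).castSucc)
      = g m i ∘ ⇑(Equiv.ofBijective φ hbij) := by
    funext a
    have ha := a.isLt
    apply Fin.ext
    show (((⟨i-1, by omega⟩ : Fin (m+3)).succAbove a).castSucc : ℕ) = ((g m i (φ a)) : ℕ)
    rw [Fin.coe_castSucc, g_val, hφval]
    rcases lt_or_ge (a.castSucc) (⟨i-1, by omega⟩ : Fin (m+3)) with hlt | hge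
    · rw [Fin.succAbove_of_castSucc_lt _ _ hlt, Fin.coe_castSucc]
      have hlt' : (a:ℕ) < i - 1 := hlt
      rw [if_pos (by omega)]
      have : i + ((a:ℕ) + m + 3 - i) = (a:ℕ) + (m+3) := by omega
      rw [this, Nat.add_mod_right, Nat.mod_eq_of_lt (by omega)]
    · rw [Fin.succAbove_of_le_castSucc _ _ hge, Fin.val_succ]
      have hge' : i - 1 ≤ (a:ℕ) := hge
      rw [if_neg (by omega)]
      have : i + ((a:ℕ) + 1 - i) = (a:ℕ) + 1 := by omega
      rw [this, Nat.mod_eq_of_lt (by omega)]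
  rw [hfg, ← Matrix.submatrix_submatrix, Matrix.det_submatrix_equiv_self, Lsub_T m i h1 h2]

-- minor of Cc at (0,0)
lemma C_minor0 (m : ℕ) : (Cc (m+3)).submatrix Fin.succ Fin.succ = T (m+2) := by
  ext a b
  have ha := a.isLt; have hb := b.isLt
  simp only [Matrix.submatrix_apply, Cc, T, Fin.val_succ]
  exact if_congr (by omega) rfl (if_congr (by omega) rfl rfl)

-- det of M2 = Cc.submatrix succ castSucc
lemma detM2 (m : ℕ) :
    ((Cc (m+3)).submatrix Fin.succ Fin.castSucc).det
      = (-1:ℚ)^(m+2) * (1 + ((T (m+1)).det)) := by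
  set M := (Cc (m+3)).submatrix (Fin.succ : Fin (m+2) → Fin (m+3)) Fin.castSucc with hM
  rw [Matrix.det_succ_column_zero, Fin.sum_univ_succ]
  have htail : ∀ a : Fin (m+1),
      ((-1:ℚ))^((a.succ : Fin (m+2)) : ℕ) * M a.succ 0 * ((M.submatrix a.succ.succAbove Fin.succ).det)
      = if a = ⟨m, by omega⟩ then ((-1:ℚ))^((a.succ : Fin (m+2)) : ℕ) * M a.succ 0 * ((M.submatrix a.succ.succAbove Fin.succ).det) else 0 := by
    intro a
    split_ifs with h
    · rfl
    · have hval : (a:ℕ) ≠ m := fun hh => h (Fin.ext hh)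
      have ha := a.isLt
      have hz : M a.succ 0 = 0 := by
        simp only [hM, Matrix.submatrix_apply, Cc, Fin.val_succ, Fin.coe_castSucc, Fin.val_zero]
        rw [if_neg (by omega), if_neg (by omega)]
      rw [hz]; ring
  rw [Finset.sum_congr rfl (fun a _ => htail a), Finset.sum_ite_eq' Finset.univ]
  rw [if_pos (Finset.mem_univ _)]
  -- a = 0 term
  have h00 : M 0 0 = -1 := by
    simp only [hM, Matrix.submatrix_apply, Cc, Fin.val_succ, Fin.coe_castSucc, Fin.val_zero]
    norm_num
  have hmin0 : (M.submatrix (Fin.succAbove 0) Fin.succ).det = (-1:ℚ)^(m+1) := by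
    have htri : (M.submatrix (Fin.succAbove 0) Fin.succ).BlockTriangular id := by
      intro x y hxy
      have hx := x.isLt; have hy := y.isLt
      have hyx : (y:ℕ) < x := hxy
      simp only [Matrix.submatrix_apply, hM, Fin.succAbove_zero, Cc, Fin.val_succ, Fin.coe_castSucc]
      rw [if_neg (by omega), if_neg (by omega)]
    rw [Matrix.det_of_upperTriangular htri]
    have hdiag : ∀ x : Fin (m+1), (M.submatrix (Fin.succAbove 0) Fin.succ) x x = -1 := by
      intro x
      have hx := x.isLt
      simp only [Matrix.submatrix_apply, hM, Fin.succAbove_zero, Cc, Fin.val_succ, Fin.coe_castSucc]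
      rw [if_neg (by omega)]
      simp
    rw [Finset.prod_congr rfl (fun x _ => hdiag x), Finset.prod_const, Finset.card_univ,
      Fintype.card_fin]
  -- a = last term
  have hlast : ((⟨m, by omega⟩ : Fin (m+1)).succ : Fin (m+2)) = Fin.last (m+1) := by
    ext; simp
  have hL0 : M (Fin.last (m+1)) 0 = -1 := by
    simp only [hM, Matrix.submatrix_apply, Cc, Fin.val_succ, Fin.coe_castSucc, Fin.val_zero,
      Fin.val_last]
    rw [if_neg (by omega)]
    simp
  have hminL : (M.submatrix (Fin.succAbove (Fin.last (m+1))) Fin.succ).det = (T (m+1)).det := by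
    congr 1
    ext a b
    have ha := a.isLt; have hb := b.isLt
    simp only [Matrix.submatrix_apply, hM, Fin.succAbove_last, Cc, T, Fin.val_succ,
      Fin.coe_castSucc]
    exact if_congr (by omega) rfl (if_congr (by omega) rfl rfl)
  rw [hlast, hL0, hmin0, h00, hminL]
  simp only [Fin.val_zero, Fin.val_last, pow_zero]
  ring

lemma val_sa1_zero (n : ℕ) : (((Fin.succ (0 : Fin (n+1))).succAbove (0 : Fin (n+1))) : ℕ) = 0 := by
  rw [Fin.succAbove_of_castSucc_lt _ _ (by simp [Fin.lt_def])]
  simp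

lemma val_sa1_succ (n : ℕ) (y : Fin n) :
    (((Fin.succ (0 : Fin (n+1))).succAbove y.succ) : ℕ) = (y:ℕ) + 2 := by
  rw [Fin.succAbove_of_le_castSucc _ _ (by simp [Fin.le_def])]
  simp

lemma detM1 (m : ℕ) :
    ((Cc (m+3)).submatrix Fin.succ (Fin.succ (0:Fin (m+1+1))).succAbove).det
      = -(T (m+1)).det - 1 := by
  set M := (Cc (m+3)).submatrix Fin.succ (Fin.succ (0:Fin (m+1+1))).succAbove with hM
  rw [Matrix.det_succ_column_zero, Fin.sum_univ_succ]
  have htail : ∀ a : Fin (m+1),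
      ((-1:ℚ))^((a.succ : Fin (m+2)) : ℕ) * M a.succ 0 * ((M.submatrix a.succ.succAbove Fin.succ).det)
      = if a = ⟨m, by omega⟩ then ((-1:ℚ))^((a.succ : Fin (m+2)) : ℕ) * M a.succ 0 * ((M.submatrix a.succ.succAbove Fin.succ).det) else 0 := by
    intro a
    split_ifs with h
    · rfl
    · have hval : (a:ℕ) ≠ m := fun hh => h (Fin.ext hh)
      have ha := a.isLt
      have hz : M a.succ 0 = 0 := by
        simp only [hM, Matrix.submatrix_apply, Cc, Fin.val_succ, val_sa1_zero]
        rw [if_neg (by omega), if_neg (by omega)]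
      rw [hz]; ring
  rw [Finset.sum_congr rfl (fun a _ => htail a), Finset.sum_ite_eq' Finset.univ,
    if_pos (Finset.mem_univ _)]
  have h00 : M 0 0 = -1 := by
    simp only [hM, Matrix.submatrix_apply, Cc, Fin.val_succ, val_sa1_zero, Fin.val_zero]
    norm_num
  have hmin0 : (M.submatrix (Fin.succAbove 0) Fin.succ).det = (T (m+1)).det := by
    congr 1
    ext x y
    have hx := x.isLt; have hy := y.isLt
    simp only [Matrix.submatrix_apply, hM, Fin.succAbove_zero, Cc, T, Fin.val_succ, val_sa1_succ]
    exact if_congr (by omega) rfl (if_congr (by omega) rfl rfl)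
  have hlast : ((⟨m, by omega⟩ : Fin (m+1)).succ : Fin (m+2)) = Fin.last (m+1) := by
    ext; simp
  have hL0 : M (Fin.last (m+1)) 0 = -1 := by
    simp only [hM, Matrix.submatrix_apply, Cc, Fin.val_succ, val_sa1_zero, Fin.val_last]
    rw [if_neg (by omega)]
    simp
  have hminL : (M.submatrix (Fin.succAbove (Fin.last (m+1))) Fin.succ).det = (-1:ℚ)^(m+1) := by
    have htri : (M.submatrix (Fin.succAbove (Fin.last (m+1))) Fin.succ).BlockTriangular OrderDual.toDual := by
      intro x y hxy
      have hyx : (x:ℕ) < (y:ℕ) := hxy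
      have hx := x.isLt; have hy := y.isLt
      simp only [Matrix.submatrix_apply, hM, Fin.succAbove_last, Cc, Fin.val_succ,
        Fin.coe_castSucc, val_sa1_succ]
      rw [if_neg (by omega), if_neg (by omega)]
    rw [Matrix.det_of_lowerTriangular _ htri]
    have hdiag : ∀ x : Fin (m+1), (M.submatrix (Fin.succAbove (Fin.last (m+1))) Fin.succ) x x = -1 := by
      intro x
      have hx := x.isLt
      simp only [Matrix.submatrix_apply, hM, Fin.succAbove_last, Cc, Fin.val_succ,
        Fin.coe_castSucc, val_sa1_succ]
      rw [if_neg (by omega)]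
      simp
    rw [Finset.prod_congr rfl (fun x _ => hdiag x), Finset.prod_const, Finset.card_univ,
      Fintype.card_fin]
  rw [hlast, hL0, hmin0, h00, hminL]
  simp only [Fin.val_zero, Fin.val_last, pow_zero]
  have hpow : ((-1:ℚ))^(m+1) * ((-1:ℚ))^(m+1) = 1 := by
    rw [← pow_add, show (m+1)+(m+1) = 2*(m+1) by ring, pow_mul]
    norm_num
  linear_combination -hpow

lemma detC (m : ℕ) :
    (Cc (m+3)).det = 3*(T (m+2)).det - 2*(T (m+1)).det - 2 := by
  rw [Matrix.det_succ_row_zero, Fin.sum_univ_succ, Fin.sum_univ_succ]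
  have htail : ∀ j : Fin (m+1),
      ((-1:ℚ))^(((j.succ.succ : Fin (m+3))) : ℕ) * Cc (m+3) 0 j.succ.succ *
        ((Cc (m+3)).submatrix Fin.succ j.succ.succ.succAbove).det
      = if j = ⟨m, by omega⟩ then ((-1:ℚ))^(((j.succ.succ : Fin (m+3))) : ℕ) * Cc (m+3) 0 j.succ.succ *
        ((Cc (m+3)).submatrix Fin.succ j.succ.succ.succAbove).det else 0 := by
    intro j
    split_ifs with h
    · rfl
    · have hval : (j:ℕ) ≠ m := fun hh => h (Fin.ext hh)
      have hj := j.isLt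
      have hz : Cc (m+3) 0 j.succ.succ = 0 := by
        simp only [Cc, Fin.val_succ, Fin.val_zero]
        rw [if_neg (by omega), if_neg (by omega)]
      rw [hz]; ring
  rw [Finset.sum_congr rfl (fun j _ => htail j), Finset.sum_ite_eq' Finset.univ,
    if_pos (Finset.mem_univ _)]
  have h00 : Cc (m+3) 0 0 = 3 := by simp [Cc]
  have h01 : Cc (m+3) 0 (Fin.succ 0) = -1 := by
    simp only [Cc, Fin.val_succ, Fin.val_zero]
    norm_num
  have hlast2 : ((⟨m, by omega⟩ : Fin (m+1)).succ.succ : Fin (m+3)) = Fin.last (m+2) := by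
    ext; simp
  have h0L : Cc (m+3) 0 (Fin.last (m+2)) = -1 := by
    simp only [Cc, Fin.val_last, Fin.val_zero]
    rw [if_neg (by omega)]
    simp
  have hmin00 : ((Cc (m+3)).submatrix Fin.succ (Fin.succAbove 0)).det = (T (m+2)).det := by
    rw [Fin.succAbove_zero, C_minor0]
  have hminL2 : ((Cc (m+3)).submatrix Fin.succ (Fin.succAbove (Fin.last (m+2)))).det
      = (-1:ℚ)^(m+2) * (1 + ((T (m+1)).det)) := by
    rw [Fin.succAbove_last, detM2]
  rw [hlast2, h00, h01, h0L, hmin00, hminL2, detM1]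
  simp only [Fin.val_zero, Fin.val_succ, Fin.val_last, pow_zero]
  have hpow : ((-1:ℚ))^(m+2) * ((-1:ℚ))^(m+2) = 1 := by
    rw [← pow_add, show (m+2)+(m+2) = 2*(m+2) by ring, pow_mul]
    norm_num
  linear_combination -hpow - (T (m+1)).det * hpow

/-- In the wheel graph on `k = m+4` vertices the resistance distance between the
hub `k` and a rim vertex `i ∈ {1, …, k-1}`, computed as
`det(L({i,k}|{i,k}))/det(L(k|k))`, equals `F_{2k-2}²/(F_{4k-4} - 2F_{2k-2})`. -/
theorem stmt12 (m i : ℕ) (h1 : 1 ≤ i) (h2 : i ≤ m + 3) :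
    let k := m + 4
    let L := lapl k (wheelAdj k)
    let p : Fin (m + 3) := ⟨i - 1, by omega⟩
    (L.submatrix (fun a : Fin (m + 2) => (p.succAbove a).castSucc)
          (fun a : Fin (m + 2) => (p.succAbove a).castSucc)).det /
        (L.submatrix (fun a : Fin (m + 3) => a.castSucc)
          (fun a : Fin (m + 3) => a.castSucc)).det =
      (Nat.fib (2 * k - 2) : ℚ) ^ 2 /
        ((Nat.fib (4 * k - 4) : ℚ) - 2 * (Nat.fib (2 * k - 2) : ℚ)) := by
  intro k L p
  have e1 : (L.submatrix (fun a : Fin (m + 2) => (p.succAbove a).castSucc)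
      (fun a : Fin (m + 2) => (p.succAbove a).castSucc)).det = (Nat.fib (2*m+6) : ℚ) := by
    have h := num_det m i h1 h2
    rw [detT, show (2*(m+2)+2) = 2*m+6 from by ring] at h
    exact h
  have e2 : (L.submatrix (fun a : Fin (m + 3) => a.castSucc)
      (fun a : Fin (m + 3) => a.castSucc)).det
      = 3*(Nat.fib (2*m+6) : ℚ) - 2*(Nat.fib (2*m+4) : ℚ) - 2 := by
    have h : (L.submatrix (fun a : Fin (m + 3) => a.castSucc)
        (fun a : Fin (m + 3) => a.castSucc)) = Cc (m+3) := Lsub_C m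
    rw [h, detC, detT, detT, show (2*(m+2)+2) = 2*m+6 from by ring,
      show (2*(m+1)+2) = 2*m+4 from by ring]
  rw [e1, e2]
  show _ = (Nat.fib (2 * (m+4) - 2) : ℚ) ^ 2 /
      ((Nat.fib (4 * (m+4) - 4) : ℚ) - 2 * (Nat.fib (2 * (m+4) - 2) : ℚ))
  rw [show 2 * (m+4) - 2 = 2*m+6 from by omega, show 4 * (m+4) - 4 = 4*m+12 from by omega]
  have hFpos : 0 < Nat.fib (2*m+6) := Nat.fib_pos.mpr (by omega)
  have hF : (Nat.fib (2*m+6) : ℚ) ≠ 0 := by exact_mod_cast hFpos.ne'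
  have hle : Nat.fib (2*m+6) ≤ 2 * Nat.fib (2*m+7) := by
    have := Nat.fib_le_fib_succ (n := 2*m+6)
    have h7 : Nat.fib (2*m+6+1) = Nat.fib (2*m+7) := by norm_num
    omega
  have h2m : Nat.fib (4*m+12) = Nat.fib (2*m+6) * (2 * Nat.fib (2*m+7) - Nat.fib (2*m+6)) := by
    have h := Nat.fib_two_mul (2*m+6)
    rw [show 4*m+12 = 2*(2*m+6) from by ring, h]
  have c1 : (Nat.fib (4*m+12) : ℚ)
      = (Nat.fib (2*m+6) : ℚ) * (2*(Nat.fib (2*m+7) : ℚ) - (Nat.fib (2*m+6) : ℚ)) := by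
    rw [h2m]
    push_cast [hle]
    ring
  have hG : Nat.fib (2*m+7) + Nat.fib (2*m+4) = 2 * Nat.fib (2*m+6) := by
    have a1 := fib3 (2*m+4)
    have a2 := fib3 (2*m+5)
    ring_nf at a1 a2 ⊢
    omega
  have c2 : (Nat.fib (2*m+7) : ℚ) = 2*(Nat.fib (2*m+6) : ℚ) - (Nat.fib (2*m+4) : ℚ) := by
    have := congrArg (fun x : ℕ => (x : ℚ)) hG
    push_cast at this
    linarith
  have hkey : (Nat.fib (4*m+12) : ℚ) - 2 * (Nat.fib (2*m+6) : ℚ)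
      = (Nat.fib (2*m+6) : ℚ) * (3*(Nat.fib (2*m+6) : ℚ) - 2*(Nat.fib (2*m+4) : ℚ) - 2) := by
    rw [c1]
    linear_combination (2*(Nat.fib (2*m+6) : ℚ)) * c2
  rw [hkey, sq, mul_div_mul_left _ _ hF]
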